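/- Let γ : [0, L] → ℝ^N be an arc-length parameterized C¹ curve (‖γ'(t)‖ = 1 for all t), and suppose there exists τ > 0 such that the angle between γ'(t) and γ'(s) is at most |t-s|/τ for all t, s ∈ [0,L]. Then for every t₀ ∈ [0,L] and δ ∈ (0, (π/2)τ] with t₀ + δ ≤ L, the angle between the chord γ(t₀+δ) - γ(t₀) and the tangent γ'(t₀) satisfies ∠(γ(t₀+δ) - γ(t₀), γ'(t₀)) ≤ δ/(2τ). -/

import Mathlib

open InnerProductGeometry

open scoped RealInnerProductSpace

set_option maxHeartbeats 1000000 in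
theorem chord_tangent_angle_bound {N : ℕ} (L τ : ℝ) (hτ : 0 < τ)
    (γ γ' : ℝ → EuclideanSpace ℝ (Fin N))
    (hderiv : ∀ t ∈ Set.Icc (0:ℝ) L, HasDerivAt γ (γ' t) t)
    (hunit : ∀ t ∈ Set.Icc (0:ℝ) L, ‖γ' t‖ = 1)
    (hangle : ∀ t ∈ Set.Icc (0:ℝ) L, ∀ s ∈ Set.Icc (0:ℝ) L,
      angle (γ' t) (γ' s) ≤ |t - s| / τ) :
    ∀ t₀ ∈ Set.Icc (0:ℝ) L, ∀ δ : ℝ, 0 < δ → δ ≤ Real.pi / 2 * τ → t₀ + δ ≤ L →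
      angle (γ (t₀ + δ) - γ t₀) (γ' t₀) ≤ δ / (2 * τ) := by
  intro t₀ ht₀ δ hδ hδτ hL
  have hπ := Real.pi_pos
  obtain ⟨ht₀0, ht₀L⟩ := ht₀
  have hle : t₀ ≤ t₀ + δ := by linarith
  have hmem : ∀ t ∈ Set.Icc t₀ (t₀ + δ), t ∈ Set.Icc (0:ℝ) L := fun t ht =>
    ⟨le_trans ht₀0 ht.1, le_trans ht.2 hL⟩
  set T := γ' t₀ with hTdef
  have hT1 : ‖T‖ = 1 := hunit t₀ ⟨ht₀0, ht₀L⟩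
  have ha_pos : 0 < δ / τ := div_pos hδ hτ
  have ha_le : δ / τ ≤ Real.pi / 2 := (div_le_iff₀ hτ).2 (by linarith)
  -- pointwise lower bound on inner product with the tangent
  have hcosbound : ∀ t ∈ Set.Icc t₀ (t₀ + δ),
      Real.cos ((t - t₀) / τ) ≤ ⟪γ' t, T⟫ := by
    intro t ht
    have htL := hmem t ht
    have h1 : ‖γ' t‖ = 1 := hunit t htL
    have hang := hangle t htL t₀ ⟨ht₀0, ht₀L⟩
    rw [abs_of_nonneg (by linarith [ht.1] : (0:ℝ) ≤ t - t₀)] at hang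
    have hfr : (t - t₀) / τ ≤ δ / τ :=
      div_le_div_of_nonneg_right (by linarith [ht.2]) hτ.le
    have h2 : Real.cos ((t - t₀) / τ) ≤ Real.cos (angle (γ' t) T) := by
      apply Real.cos_le_cos_of_nonneg_of_le_pi (angle_nonneg _ _) _ hang
      linarith
    rwa [cos_angle, h1, hT1, mul_one, div_one] at h2
  -- γ' is Lipschitz on [0, L], hence continuous
  have hlip : ∀ t ∈ Set.Icc (0:ℝ) L, ∀ s ∈ Set.Icc (0:ℝ) L,
      ‖γ' t - γ' s‖ ≤ |t - s| / τ := by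
    intro t ht s hs
    have h1 : ‖γ' t‖ = 1 := hunit t ht
    have h2 : ‖γ' s‖ = 1 := hunit s hs
    set θ := angle (γ' t) (γ' s) with hθ
    have hang := hangle t ht s hs
    have hθ0 : 0 ≤ θ := angle_nonneg _ _
    have hci : Real.cos θ = ⟪γ' t, γ' s⟫ := by
      rw [cos_angle, h1, h2, mul_one, div_one]
    have hsq : ‖γ' t - γ' s‖ ^ 2 = 2 - 2 * Real.cos θ := by
      rw [norm_sub_sq_real, h1, h2, hci]; ring
    have hub : 1 - θ ^ 2 / 2 ≤ Real.cos θ := Real.one_sub_sq_div_two_le_cos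
    have hθsq : θ ^ 2 ≤ (|t - s| / τ) ^ 2 := by
      apply pow_le_pow_left₀ hθ0 hang
    have habs : 0 ≤ |t - s| / τ := div_nonneg (abs_nonneg _) hτ.le
    nlinarith [norm_nonneg (γ' t - γ' s)]
  have hcont : ContinuousOn γ' (Set.Icc (0:ℝ) L) := by
    have : LipschitzOnWith (Real.toNNReal τ⁻¹) γ' (Set.Icc (0:ℝ) L) := by
      apply LipschitzOnWith.of_dist_le_mul
      intro x hx y hy
      have := hlip x hx y hy
      rw [dist_eq_norm, dist_eq_norm]
      calc ‖γ' x - γ' y‖ ≤ |x - y| / τ := this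
        _ = (Real.toNNReal τ⁻¹ : ℝ) * ‖x - y‖ := by
            rw [Real.coe_toNNReal _ (inv_nonneg.2 hτ.le), Real.norm_eq_abs]
            rw [div_eq_inv_mul]
    exact this.continuousOn
  have hcont' : ContinuousOn γ' (Set.Icc t₀ (t₀ + δ)) := hcont.mono hmem
  -- integrability facts
  have hgcont : ContinuousOn (fun t => ⟪γ' t, T⟫) (Set.Icc t₀ (t₀ + δ)) :=
    hcont'.inner continuousOn_const
  have hgint : IntervalIntegrable (fun t => ⟪γ' t, T⟫)
      MeasureTheory.volume t₀ (t₀ + δ) := by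
    apply ContinuousOn.intervalIntegrable
    rwa [Set.uIcc_of_le hle]
  have hccos : Continuous fun t : ℝ => Real.cos ((t - t₀) / τ) := by fun_prop
  have hcsin : Continuous fun t : ℝ => Real.sin ((t - t₀) / τ) := by fun_prop
  -- FTC for the inner product with T
  have hFTC1 : ∫ t in t₀..t₀ + δ, ⟪γ' t, T⟫ = ⟪γ (t₀ + δ) - γ t₀, T⟫ := by
    rw [inner_sub_left]
    apply intervalIntegral.integral_eq_sub_of_hasDerivAt (f := fun s => (inner ℝ (γ s) T : ℝ)) _ hgint
    intro t ht
    rw [Set.uIcc_of_le hle] at ht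
    have hd := (hderiv t (hmem t ht)).inner ℝ (hasDerivAt_const t T)
    simpa using hd
  -- value of the model integrals
  have hI1 : ∫ t in t₀..t₀ + δ, Real.cos ((t - t₀) / τ) = τ * Real.sin (δ / τ) := by
    have hant : ∀ t : ℝ, HasDerivAt (fun s => τ * Real.sin ((s - t₀) / τ))
        (Real.cos ((t - t₀) / τ)) t := by
      intro t
      have h1 : HasDerivAt (fun s : ℝ => (s - t₀) / τ) (1 / τ) t := by
        simpa using ((hasDerivAt_id t).sub_const t₀).div_const τ
      have h2 := ((Real.hasDerivAt_sin ((t - t₀) / τ)).comp t h1).const_mul τ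
      refine h2.congr_deriv ?_
      field_simp
    rw [intervalIntegral.integral_eq_sub_of_hasDerivAt (fun t _ => hant t)
      (hccos.intervalIntegrable _ _)]
    simp only [add_sub_cancel_left, sub_self, zero_div, Real.sin_zero, mul_zero, sub_zero]
  have hI2 : ∫ t in t₀..t₀ + δ, Real.sin ((t - t₀) / τ)
      = τ * (1 - Real.cos (δ / τ)) := by
    have hant : ∀ t : ℝ, HasDerivAt (fun s => -(τ * Real.cos ((s - t₀) / τ)))
        (Real.sin ((t - t₀) / τ)) t := by
      intro t
      have h1 : HasDerivAt (fun s : ℝ => (s - t₀) / τ) (1 / τ) t := by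
        simpa using ((hasDerivAt_id t).sub_const t₀).div_const τ
      have h2 := (((Real.hasDerivAt_cos ((t - t₀) / τ)).comp t h1).const_mul τ).neg
      refine h2.congr_deriv ?_
      field_simp
    rw [intervalIntegral.integral_eq_sub_of_hasDerivAt (fun t _ => hant t)
      (hcsin.intervalIntegrable _ _)]
    simp only [add_sub_cancel_left, sub_self, zero_div, Real.cos_zero, mul_one]
    ring
  set c := γ (t₀ + δ) - γ t₀ with hc
  set P := ⟪c, T⟫ with hPdef
  -- lower bound on P
  have hP : τ * Real.sin (δ / τ) ≤ P := by
    have hm := intervalIntegral.integral_mono_on hle (hccos.intervalIntegrable _ _)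
      hgint hcosbound
    rw [hI1, hFTC1] at hm
    exact hm
  -- orthogonal component bound
  have horth : ‖c - P • T‖ ≤ τ * (1 - Real.cos (δ / τ)) := by
    have hhcont : ContinuousOn (fun t => γ' t - (⟪γ' t, T⟫) • T)
        (Set.Icc t₀ (t₀ + δ)) := hcont'.sub (hgcont.smul continuousOn_const)
    have hhint : IntervalIntegrable (fun t => γ' t - (⟪γ' t, T⟫) • T)
        MeasureTheory.volume t₀ (t₀ + δ) := by
      apply ContinuousOn.intervalIntegrable
      rwa [Set.uIcc_of_le hle]
    have hFTC2 : ∫ t in t₀..t₀ + δ, (γ' t - (⟪γ' t, T⟫) • T) = c - P • T := by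
      have heq : c - P • T =
          (γ (t₀ + δ) - (⟪γ (t₀ + δ), T⟫) • T) - (γ t₀ - (⟪γ t₀, T⟫) • T) := by
        rw [hc, hPdef, hc, inner_sub_left, sub_smul]
        abel
      rw [heq]
      apply intervalIntegral.integral_eq_sub_of_hasDerivAt (f := fun s => γ s - (inner ℝ (γ s) T : ℝ) • T) _ hhint
      intro t ht
      rw [Set.uIcc_of_le hle] at ht
      have hd1 := hderiv t (hmem t ht)
      have hd2 := (hd1.inner ℝ (hasDerivAt_const t T)).smul_const T
      have hd3 := hd1.sub hd2
      refine hd3.congr_deriv ?_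
      simp
    have hnormle : ∀ t ∈ Set.Icc t₀ (t₀ + δ),
        ‖γ' t - (⟪γ' t, T⟫) • T‖ ≤ Real.sin ((t - t₀) / τ) := by
      intro t ht
      have h1 : ‖γ' t‖ = 1 := hunit t (hmem t ht)
      set g := ⟪γ' t, T⟫ with hg
      have hsq : ‖γ' t - g • T‖ ^ 2 = 1 - g ^ 2 := by
        rw [norm_sub_sq_real, real_inner_smul_right, norm_smul, h1, hT1, ← hg,
          Real.norm_eq_abs, mul_one, sq_abs]
        ring
      have hcnn : 0 ≤ Real.cos ((t - t₀) / τ) := by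
        apply Real.cos_nonneg_of_mem_Icc
        constructor
        · have : (0:ℝ) ≤ (t - t₀) / τ := div_nonneg (by linarith [ht.1]) hτ.le
          linarith
        · have : (t - t₀) / τ ≤ δ / τ :=
            div_le_div_of_nonneg_right (by linarith [ht.2]) hτ.le
          linarith
      have hgb := hcosbound t ht
      have hsnn : 0 ≤ Real.sin ((t - t₀) / τ) := by
        apply Real.sin_nonneg_of_nonneg_of_le_pi
        · exact div_nonneg (by linarith [ht.1]) hτ.le
        · have : (t - t₀) / τ ≤ δ / τ :=
            div_le_div_of_nonneg_right (by linarith [ht.2]) hτ.le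
          linarith
      have hssq : Real.sin ((t - t₀) / τ) ^ 2 = 1 - Real.cos ((t - t₀) / τ) ^ 2 :=
        Real.sin_sq _
      nlinarith [norm_nonneg (γ' t - g • T)]
    calc ‖c - P • T‖ = ‖∫ t in t₀..t₀ + δ, (γ' t - (⟪γ' t, T⟫) • T)‖ := by
          rw [hFTC2]
      _ ≤ ∫ t in t₀..t₀ + δ, ‖γ' t - (⟪γ' t, T⟫) • T‖ :=
          intervalIntegral.norm_integral_le_integral_norm hle
      _ ≤ ∫ t in t₀..t₀ + δ, Real.sin ((t - t₀) / τ) := by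
          apply intervalIntegral.integral_mono_on hle _ (hcsin.intervalIntegrable _ _)
            hnormle
          apply ContinuousOn.intervalIntegrable
          rw [Set.uIcc_of_le hle]
          exact (hcont'.sub (hgcont.smul continuousOn_const)).norm
      _ = τ * (1 - Real.cos (δ / τ)) := hI2
  -- Pythagoras
  set Q := ‖c - P • T‖ with hQdef
  have hQ0 : 0 ≤ Q := norm_nonneg _
  have hpyth : ‖c‖ ^ 2 = P ^ 2 + Q ^ 2 := by
    have hdec : c = P • T + (c - P • T) := by abel
    have hortho : ⟪P • T, c - P • T⟫ = 0 := by
      rw [real_inner_smul_left, inner_sub_right, real_inner_smul_right,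
        real_inner_self_eq_norm_sq, hT1, real_inner_comm]
      ring
    rw [hQdef]
    conv_lhs => rw [hdec]
    rw [norm_add_sq_real, hortho, norm_smul, hT1]
    simp [Real.norm_eq_abs, mul_pow, sq_abs]
  -- positivity
  have hsinpos : 0 < Real.sin (δ / τ) :=
    Real.sin_pos_of_pos_of_lt_pi ha_pos (by linarith)
  have hPpos : 0 < P := lt_of_lt_of_le (mul_pos hτ hsinpos) hP
  have hcpos : 0 < ‖c‖ := by
    have := real_inner_le_norm c T
    rw [hT1, mul_one] at this
    linarith
  -- half-angle algebra
  have hxval' : δ / τ = 2 * (δ / (2 * τ)) := by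
    field_simp
  have hx0' : 0 < δ / (2 * τ) := div_pos hδ (by linarith)
  have hxle' : δ / (2 * τ) ≤ Real.pi / 4 := by
    rw [div_le_iff₀ (by linarith : (0:ℝ) < 2 * τ)]
    nlinarith [hδτ]
  set x := δ / (2 * τ) with hxdef
  have hxval : δ / τ = 2 * x := hxval'
  have hx0 : 0 < x := hx0'
  have hxle : x ≤ Real.pi / 4 := hxle'
  have hcosx : 0 < Real.cos x :=
    Real.cos_pos_of_mem_Ioo ⟨by linarith, by linarith⟩
  have hsinx : 0 ≤ Real.sin x :=
    Real.sin_nonneg_of_nonneg_of_le_pi hx0.le (by linarith)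
  have hsin2 : Real.sin (δ / τ) = 2 * Real.sin x * Real.cos x := by
    rw [hxval, Real.sin_two_mul]
  have hcos2 : Real.cos (δ / τ) = 1 - 2 * Real.sin x ^ 2 := by
    rw [hxval, Real.cos_two_mul, Real.cos_sq']
    ring
  -- key inequality : Q * cos x ≤ P * sin x
  have hkey : Q * Real.cos x ≤ P * Real.sin x := by
    have h1 : Q * Real.cos x ≤ 2 * τ * Real.sin x ^ 2 * Real.cos x := by
      have := mul_le_mul_of_nonneg_right horth hcosx.le
      rw [hcos2] at this
      nlinarith
    have h2 : 2 * τ * Real.sin x ^ 2 * Real.cos x ≤ P * Real.sin x := by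
      have := mul_le_mul_of_nonneg_right hP hsinx
      rw [hsin2] at this
      nlinarith
    linarith
  have hsq2 : (‖c‖ * Real.cos x) ^ 2 ≤ P ^ 2 := by
    have hQcos : 0 ≤ Q * Real.cos x := mul_nonneg hQ0 hcosx.le
    have := mul_self_le_mul_self hQcos hkey
    nlinarith [Real.sin_sq_add_cos_sq x]
  have hfin : ‖c‖ * Real.cos x ≤ P := by
    nlinarith [mul_nonneg (norm_nonneg c) hcosx.le, hPpos.le]
  -- conclude via monotonicity of cos
  have hcosangle : Real.cos x ≤ Real.cos (angle c T) := by
    rw [cos_angle, hT1, mul_one]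
    rw [le_div_iff₀ hcpos]
    linarith [hfin]
  by_contra hcon
  push_neg at hcon
  have hxmem : x ∈ Set.Icc 0 Real.pi := ⟨hx0.le, by linarith⟩
  have hamem : angle c T ∈ Set.Icc 0 Real.pi := ⟨angle_nonneg _ _, angle_le_pi _ _⟩
  have := Real.strictAntiOn_cos hxmem hamem hcon
  linarith
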